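/- Let V be a reflexive real Banach space (the canonical embedding ι : V → V'' is surjective), let φ be a weight function and let φ⁻¹ : [0,∞) → [0,∞) denote its inverse function (which is again a weight function). Then the inverse of the duality mapping J_V^φ is the duality mapping on V' of weight φ⁻¹: for all v ∈ V and v* ∈ V', one has v* ∈ J_V^φ(v) if and only if ι(v) ∈ J_{V'}^{φ⁻¹}(v*). -/
import Mathlib


/-- A weight function: continuous, strictly increasing on `[0,∞)`, vanishing at `0`,
mapping `[0,∞)` into `[0,∞)`, and tending to `∞` at `∞`. -/
def IsWeightFun (φ : ℝ → ℝ) : Prop :=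
  ContinuousOn φ (Set.Ici 0) ∧ StrictMonoOn φ (Set.Ici 0) ∧ φ 0 = 0 ∧
    (∀ t ∈ Set.Ici (0 : ℝ), 0 ≤ φ t) ∧ Filter.Tendsto φ Filter.atTop Filter.atTop

/-- The duality set of weight `φ` at `v`. -/
def dualitySet (V : Type*) [NormedAddCommGroup V] [NormedSpace ℝ V]
    (φ : ℝ → ℝ) (v : V) : Set (V →L[ℝ] ℝ) :=
  {f | f v = ‖v‖ * ‖f‖ ∧ ‖f‖ = φ ‖v‖}

/-- For a reflexive real Banach space `V` and a weight function `φ` with inverse weight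
function `φinv`, the inverse of the duality mapping `J_V^φ` is the duality mapping on the
dual `V'` of weight `φ⁻¹`: `v* ∈ J_V^φ(v)` iff `ι(v) ∈ J_{V'}^{φ⁻¹}(v*)`, where `ι` is the
canonical embedding of `V` into its bidual. -/
theorem statement8 {V : Type*} [NormedAddCommGroup V] [NormedSpace ℝ V] [CompleteSpace V]
    (hrefl : Function.Surjective ⇑(NormedSpace.inclusionInDoubleDual ℝ V))
    (φ φinv : ℝ → ℝ) (hφ : IsWeightFun φ) (hφinv : IsWeightFun φinv)
    (hinv₁ : ∀ t ∈ Set.Ici (0 : ℝ), φinv (φ t) = t)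
    (hinv₂ : ∀ t ∈ Set.Ici (0 : ℝ), φ (φinv t) = t)
    (v : V) (f : V →L[ℝ] ℝ) :
    f ∈ dualitySet V φ v ↔
      NormedSpace.inclusionInDoubleDual ℝ V v ∈ dualitySet (V →L[ℝ] ℝ) φinv f := by
  have hnorm : ‖NormedSpace.inclusionInDoubleDual ℝ V v‖ = ‖v‖ :=
    (NormedSpace.inclusionInDoubleDualLi ℝ (E := V)).norm_map v
  simp only [dualitySet, Set.mem_setOf_eq, NormedSpace.dual_def, hnorm]
  constructor
  · rintro ⟨h1, h2⟩
    refine ⟨by rw [h1, mul_comm], ?_⟩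
    rw [h2, hinv₁ ‖v‖ (norm_nonneg v)]
  · rintro ⟨h1, h2⟩
    refine ⟨by rw [h1, mul_comm], ?_⟩
    rw [h2, hinv₂ ‖f‖ (norm_nonneg f)]
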